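/- Let T and T′ be trees and let θ: T → T′ be a graph homomorphism. Then θ is injective on vertices if and only if θ has no backtracking arc, i.e., there is no arc (u,v) of T together with a vertex u′ ≠ u adjacent to v such that θ(u′) = θ(u). -/

import Mathlib

open SimpleGraph

variable {V V' : Type*}

/-- A graph homomorphism `θ : T →g T'` is locally surjective if for each vertex `v` of `T`,
every vertex of `T'` adjacent to `θ v` is the image of a vertex adjacent to `v`. -/
def LocallySurjective {T : SimpleGraph V} {T' : SimpleGraph V'} (θ : T →g T') : Prop :=
  ∀ v : V, ∀ w' : V', T'.Adj (θ v) w' → ∃ w : V, T.Adj v w ∧ θ w = w'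

/-- The arc `(u,v)` is backtracking for `θ` if some vertex `u' ≠ u` adjacent to `v`
has `θ u' = θ u`. -/
def Backtracking {T : SimpleGraph V} {T' : SimpleGraph V'} (θ : T →g T') (u v : V) : Prop :=
  T.Adj u v ∧ ∃ u' : V, u' ≠ u ∧ T.Adj u' v ∧ θ u' = θ u

/-- The arc `(u,v)` is pre-backtracking for `θ` if there is a backtracking arc `(u',v')`
whose half-tree `T_{(u',v')}` is contained in the half-tree `T_{(u,v)}`. -/
def PreBacktracking {T : SimpleGraph V} {T' : SimpleGraph V'} (θ : T →g T') (u v : V) : Prop :=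
  T.Adj u v ∧ ∃ u' v' : V, Backtracking θ u' v' ∧
    ∀ w : V, T.dist w v' < T.dist w u' → T.dist w v < T.dist w u

/-- If `θ` has no backtracking arc, then the image of any path is a path. -/
lemma map_isPath_of_no_backtracking {T : SimpleGraph V} {T' : SimpleGraph V'}
    (hT' : T'.IsTree) (θ : T →g T') (hnb : ¬ ∃ u v : V, Backtracking θ u v) :
    ∀ (n : ℕ) {a b : V} (p : T.Walk a b), p.length ≤ n → p.IsPath → (p.map θ).IsPath := by
  classical
  intro n
  induction n with
  | zero =>
    intro a b p hlen _
    have : p.length = 0 := Nat.le_zero.mp hlen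
    cases p with
    | nil => simp
    | cons h q => simp at this
  | succ n ih =>
    intro a b p hlen hp
    cases p with
    | nil => simp
    | cons h q =>
      rename_i v
      rw [SimpleGraph.Walk.map_cons]
      rw [SimpleGraph.Walk.cons_isPath_iff] at hp
      have hq : q.length ≤ n := by
        have := hlen
        simp [SimpleGraph.Walk.length_cons] at this
        omega
      have hqm : (q.map θ).IsPath := ih q hq hp.1
      rw [SimpleGraph.Walk.cons_isPath_iff]
      refine ⟨hqm, ?_⟩
      intro hmem
      rw [SimpleGraph.Walk.support_map, List.mem_map] at hmem
      obtain ⟨w, hw, hθw⟩ := hmem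
      -- take the part of `q` up to `w`
      have hwa : w ≠ a := fun hwe => hp.2 (hwe ▸ hw)
      set r := q.takeUntil w hw with hr
      have hrp : r.IsPath := hp.1.takeUntil hw
      have hrm : (r.map θ).IsPath :=
        ih r (le_trans (q.length_takeUntil_le hw) hq) hrp
      -- the image of `r` is a path from θ v to θ a
      have hadj : T'.Adj (θ v) (θ a) := (θ.map_adj h).symm
      -- the single edge path from θ v to θ a
      have hep : (SimpleGraph.Walk.cons hadj SimpleGraph.Walk.nil).IsPath := by
        simp [SimpleGraph.Walk.cons_isPath_iff, hadj.ne]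
      have hrm' : ((r.map θ).copy rfl hθw).IsPath := (SimpleGraph.Walk.isPath_copy _ rfl hθw).mpr hrm
      obtain ⟨P, _, huniq⟩ := hT'.existsUnique_path (θ v) (θ a)
      have heq : ((r.map θ).copy rfl hθw) = SimpleGraph.Walk.cons hadj SimpleGraph.Walk.nil :=
        (huniq _ hrm').trans (huniq _ hep).symm
      have hlen1 : r.length = 1 := by
        have := congrArg SimpleGraph.Walk.length heq
        simpa using this
      -- so r is a single edge from v to w, giving a backtracking arc
      have hvw : T.Adj v w := SimpleGraph.Walk.adj_of_length_eq_one hlen1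
      exact hnb ⟨a, v, h, w, hwa, hvw.symm, hθw⟩

/-- A graph homomorphism between trees is injective on vertices if and only if it has no
backtracking arc. -/
theorem injective_iff_no_backtracking
    (T : SimpleGraph V) (T' : SimpleGraph V') (hT : T.IsTree) (hT' : T'.IsTree)
    (θ : T →g T') :
    Function.Injective ⇑θ ↔ ¬ ∃ u v : V, Backtracking θ u v := by
  constructor
  · rintro hinj ⟨u, v, _, u', hne, _, hθ⟩
    exact hne (hinj hθ)
  · intro hnb a b hab
    obtain ⟨p, hp, _⟩ := hT.existsUnique_path a b
    have hmp : (p.map θ).IsPath :=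
      map_isPath_of_no_backtracking hT' θ hnb p.length p le_rfl hp
    have hmp' : ((p.map θ).copy rfl hab.symm).IsPath :=
      (SimpleGraph.Walk.isPath_copy _ rfl hab.symm).mpr hmp
    have : ((p.map θ).copy rfl hab.symm) = SimpleGraph.Walk.nil :=
      SimpleGraph.Walk.isPath_iff_eq_nil.mp hmp'
    have hlen : p.length = 0 := by
      have := congrArg SimpleGraph.Walk.length this
      simpa using this
    exact SimpleGraph.Walk.eq_of_length_eq_zero hlen
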